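/- For k ≥ 2, the k-step Fibonacci numbers satisfy lim_{n→∞} f_{n+1,k}/f_{n,k} = φ_k, the unique positive real root of x^k − x^{k−1} − ⋯ − x − 1. -/

import Mathlib

open Filter Polynomial Finset

section AuxKStep

variable {k : ℕ} {q : ℝ} {u : ℕ → ℝ}

/-- Upper bound propagation: if u is bounded by B on a window of length k,
it is bounded by B forever after. -/
lemma kstep_aux_ub (hq0 : 0 < q)
    (hqs : ∑ i ∈ Finset.Icc 1 k, q ^ i = 1)
    (hrec : ∀ n, k ≤ n → u n = ∑ i ∈ Finset.Icc 1 k, q ^ i * u (n - i))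
    (hk : 2 ≤ k)
    (n : ℕ) (B : ℝ) (hB : ∀ j, n ≤ j → j ≤ n + k - 1 → u j ≤ B) :
    ∀ j, n ≤ j → u j ≤ B := by
  intro j
  induction j using Nat.strong_induction_on with
  | _ j ih =>
    intro hj
    by_cases hcase : j ≤ n + k - 1
    · exact hB j hj hcase
    · have hjk : k ≤ j := by omega
      rw [hrec j hjk]
      calc ∑ i ∈ Icc 1 k, q ^ i * u (j - i)
          ≤ ∑ i ∈ Icc 1 k, q ^ i * B := by
            apply Finset.sum_le_sum
            intro i hi
            simp only [Finset.mem_Icc] at hi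
            exact mul_le_mul_of_nonneg_left
              (ih (j - i) (by omega) (by omega)) (by positivity)
        _ = B := by rw [← Finset.sum_mul, hqs, one_mul]

lemma kstep_aux_A (hk : 2 ≤ k) (hq0 : 0 < q) (hq1 : q < 1)
    (hqs : ∑ i ∈ Finset.Icc 1 k, q ^ i = 1)
    (hrec : ∀ n, k ≤ n → u n = ∑ i ∈ Finset.Icc 1 k, q ^ i * u (n - i))
    {j ns : ℕ} (hj : k ≤ j) (h1 : ns < j) (h2 : j ≤ ns + k)
    {B : ℝ} (hB : ∀ i, j - k ≤ i → i < j → u i ≤ B) :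
    u j ≤ B - q ^ k * (B - u ns) := by
  set d := j - ns with hd
  have hdm : d ∈ Finset.Icc 1 k := Finset.mem_Icc.mpr (by omega)
  have hjd : j - d = ns := by omega
  have hstar : u ns ≤ B := hB ns (by omega) h1
  have hrest : ∑ i ∈ (Icc 1 k).erase d, q ^ i * u (j - i)
      ≤ (∑ i ∈ (Icc 1 k).erase d, q ^ i) * B := by
    rw [Finset.sum_mul]
    apply Finset.sum_le_sum
    intro i hi
    have hi' : i ∈ Icc 1 k := Finset.mem_of_mem_erase hi
    simp only [Finset.mem_Icc] at hi'
    exact mul_le_mul_of_nonneg_left (hB (j - i) (by omega) (by omega)) (by positivity)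
  have hsum : ∑ i ∈ (Icc 1 k).erase d, q ^ i = 1 - q ^ d := by
    have h := Finset.add_sum_erase (Icc 1 k) (fun i => q ^ i) hdm
    rw [hqs] at h
    linarith
  have hqd : q ^ k ≤ q ^ d := pow_le_pow_of_le_one hq0.le hq1.le (by omega)
  have hprod : 0 ≤ (q ^ d - q ^ k) * (B - u ns) :=
    mul_nonneg (by linarith) (by linarith)
  have heq : u j = q ^ d * u (j - d) + ∑ i ∈ (Icc 1 k).erase d, q ^ i * u (j - i) := by
    rw [hrec j hj, ← Finset.add_sum_erase _ _ hdm]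
  rw [hjd] at heq
  rw [hsum] at hrest
  nlinarith [heq, hrest, hprod]

lemma kstep_aux_B (hk : 2 ≤ k) (hq0 : 0 < q) (hq1 : q < 1)
    (hqs : ∑ i ∈ Finset.Icc 1 k, q ^ i = 1)
    (hrec : ∀ n, k ≤ n → u n = ∑ i ∈ Finset.Icc 1 k, q ^ i * u (n - i))
    {j : ℕ} (hj : k ≤ j + 1) {B ε : ℝ} (hε : 0 ≤ ε)
    (huj : u j ≤ B - ε) (hB : ∀ i, j + 1 - k ≤ i → i ≤ j → u i ≤ B) :
    u (j + 1) ≤ B - q * ε := by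
  have h1m : (1 : ℕ) ∈ Finset.Icc 1 k := Finset.mem_Icc.mpr (by omega)
  have heq : u (j + 1) = q ^ 1 * u (j + 1 - 1)
      + ∑ i ∈ (Icc 1 k).erase 1, q ^ i * u (j + 1 - i) := by
    rw [hrec (j + 1) hj, ← Finset.add_sum_erase _ _ h1m]
  have hrest : ∑ i ∈ (Icc 1 k).erase 1, q ^ i * u (j + 1 - i)
      ≤ (∑ i ∈ (Icc 1 k).erase 1, q ^ i) * B := by
    rw [Finset.sum_mul]
    apply Finset.sum_le_sum
    intro i hi
    have hi'' := Finset.ne_of_mem_erase hi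
    have hi' : i ∈ Icc 1 k := Finset.mem_of_mem_erase hi
    simp only [Finset.mem_Icc] at hi'
    exact mul_le_mul_of_nonneg_left (hB (j + 1 - i) (by omega) (by omega)) (by positivity)
  have hsum : ∑ i ∈ (Icc 1 k).erase 1, q ^ i = 1 - q ^ 1 := by
    have h := Finset.add_sum_erase (Icc 1 k) (fun i => q ^ i) h1m
    rw [hqs] at h
    linarith
  rw [hsum] at hrest
  rw [heq]
  simp only [Nat.add_sub_cancel, pow_one] at *
  nlinarith [hrest, huj]

end AuxKStep

theorem kstep_fib_ratio_tendsto_golden (k : ℕ) (hk : 2 ≤ k) (f : ℕ → ℕ)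
    (h0 : ∀ n ≤ k - 2, f n = 0)
    (h1 : f (k - 1) = 1)
    (hrec : ∀ n, k ≤ n → f n = ∑ i ∈ Finset.Icc 1 k, f (n - i))
    (φ : ℝ) (hφ : 0 < φ)
    (hroot : ((X : ℝ[X]) ^ k - ∑ i ∈ Finset.range k, X ^ i).eval φ = 0) :
    Tendsto (fun n => (f (n + 1) : ℝ) / (f n : ℝ)) atTop (nhds φ) := by
  -- φ^k = ∑ φ^i
  have hroot' : φ ^ k = ∑ i ∈ Finset.range k, φ ^ i := by
    have := hroot
    simp only [eval_sub, eval_pow, eval_X, eval_finset_sum] at this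
    linarith
  -- 1 < φ
  have hφ1 : 1 < φ := by
    by_contra h
    push_neg at h
    have h2 : ({0, 1} : Finset ℕ) ⊆ Finset.range k := by
      intro x hx; simp at hx; rcases hx with rfl | rfl <;> simp <;> omega
    have h3 : ∑ i ∈ ({0, 1} : Finset ℕ), φ ^ i ≤ ∑ i ∈ Finset.range k, φ ^ i :=
      Finset.sum_le_sum_of_subset_of_nonneg h2 (fun i _ _ => by positivity)
    have h4 : ∑ i ∈ ({0, 1} : Finset ℕ), φ ^ i = 1 + φ := by norm_num
    have h5 : φ ^ k ≤ φ ^ 1 := pow_le_pow_of_le_one hφ.le h (by omega)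
    simp only [pow_one] at h5
    linarith
  set q : ℝ := φ⁻¹ with hqdef
  have hq0 : 0 < q := by positivity
  have hq1 : q < 1 := by
    rw [hqdef]; exact inv_lt_one_of_one_lt₀ hφ1
  have hqφ : q * φ = 1 := inv_mul_cancel₀ hφ.ne'
  have hqs : ∑ i ∈ Finset.Icc 1 k, q ^ i = 1 := by
    have e1 : ∑ i ∈ Finset.Icc 1 k, q ^ i = ∑ i ∈ Finset.range k, q ^ (1 + i) := by
      rw [← Finset.Ico_add_one_right_eq_Icc, Finset.sum_Ico_eq_sum_range]
      simp
    have e2 : ∀ i ∈ Finset.range k, q ^ k * φ ^ (k - 1 - i) = q ^ (1 + i) := by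
      intro i hi
      simp only [Finset.mem_range] at hi
      have : q ^ k = q ^ (1 + i) * q ^ (k - 1 - i) := by
        rw [← pow_add]; congr 1; omega
      rw [this, mul_assoc]
      have : q ^ (k - 1 - i) * φ ^ (k - 1 - i) = 1 := by
        rw [← mul_pow, hqφ, one_pow]
      rw [this, mul_one]
    have e3 : q ^ k * φ ^ k = 1 := by rw [← mul_pow, hqφ, one_pow]
    calc ∑ i ∈ Finset.Icc 1 k, q ^ i = ∑ i ∈ Finset.range k, q ^ (1 + i) := e1
      _ = ∑ i ∈ Finset.range k, q ^ k * φ ^ (k - 1 - i) := by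
          exact (Finset.sum_congr rfl e2).symm
      _ = q ^ k * ∑ i ∈ Finset.range k, φ ^ (k - 1 - i) := by rw [Finset.mul_sum]
      _ = q ^ k * ∑ i ∈ Finset.range k, φ ^ i := by rw [Finset.sum_range_reflect]
      _ = q ^ k * φ ^ k := by rw [hroot']
      _ = 1 := e3
  set u : ℕ → ℝ := fun n => (f n : ℝ) * q ^ n with hudef
  have hu : ∀ n, k ≤ n → u n = ∑ i ∈ Finset.Icc 1 k, q ^ i * u (n - i) := by
    intro n hn
    have : ((f n : ℝ)) = ∑ i ∈ Finset.Icc 1 k, (f (n - i) : ℝ) := by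
      rw [hrec n hn]; push_cast; ring
    simp only [hudef]
    rw [this, Finset.sum_mul]
    apply Finset.sum_congr rfl
    intro i hi
    simp only [Finset.mem_Icc] at hi
    have : q ^ i * q ^ (n - i) = q ^ n := by rw [← pow_add]; congr 1; omega
    rw [← this]; ring
  -- window sup and inf
  have hne : ∀ n : ℕ, (Finset.Icc n (n + k - 1)).Nonempty :=
    fun n => Finset.nonempty_Icc.mpr (by omega)
  set M : ℕ → ℝ := fun n => (Finset.Icc n (n + k - 1)).sup' (hne n) u with hMdef
  set m : ℕ → ℝ := fun n => (Finset.Icc n (n + k - 1)).inf' (hne n) u with hmdef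
  have hub : ∀ n j, n ≤ j → u j ≤ M n := by
    intro n
    refine kstep_aux_ub hq0 hqs hu hk n (M n) ?_
    intro j hj hj'
    exact Finset.le_sup' u (Finset.mem_Icc.mpr ⟨hj, hj'⟩)
  have hlbrec : ∀ n, k ≤ n → (fun i => -u i) n = ∑ i ∈ Finset.Icc 1 k, q ^ i * (fun i => -u i) (n - i) := by
    intro n hn
    simp only
    rw [hu n hn, ← Finset.sum_neg_distrib]
    apply Finset.sum_congr rfl
    intro i _; ring
  have hlb : ∀ n j, n ≤ j → m n ≤ u j := by
    intro n j hj
    have := kstep_aux_ub hq0 hqs hlbrec hk n (-(m n)) ?_ j hj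
    · simpa using this
    · intro i hi hi'
      simp only [neg_le_neg_iff]
      exact Finset.inf'_le u (Finset.mem_Icc.mpr ⟨hi, hi'⟩)
  have hManti : Antitone M := by
    apply antitone_nat_of_succ_le
    intro n
    apply Finset.sup'_le
    intro j hj
    simp only [Finset.mem_Icc] at hj
    exact hub n j (by omega)
  have hmmono : Monotone m := by
    apply monotone_nat_of_le_succ
    intro n
    apply Finset.le_inf'
    intro j hj
    simp only [Finset.mem_Icc] at hj
    exact hlb n j (by omega)
  have hmM : ∀ n, m n ≤ M n := fun n => le_trans (hlb n n le_rfl) (hub n n le_rfl)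
  -- contraction
  set c : ℝ := q ^ (2 * k - 1) with hcdef
  have hc0 : 0 < c := by positivity
  have hc1 : c < 1 := pow_lt_one₀ hq0.le hq1 (by omega)
  have hcontr : ∀ n, M (n + k) ≤ M n - c * (M n - m n) := by
    intro n
    obtain ⟨ns, hns_mem, hns⟩ := Finset.exists_mem_eq_inf' (hne n) u
    simp only [Finset.mem_Icc] at hns_mem
    have hmn : m n = u ns := hns
    have hDnn : 0 ≤ M n - u ns := sub_nonneg.mpr (hub n ns (by omega))
    have claim2 : ∀ t : ℕ, u (ns + k + t) ≤ M n - q ^ t * (q ^ k * (M n - u ns)) := by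
      intro t
      induction t with
      | zero =>
        simpa using kstep_aux_A hk hq0 hq1 hqs hu (ns := ns) (j := ns + k)
          (by omega) (by omega) (by omega) (fun i hi hi' => hub n i (by omega))
      | succ t ih =>
        have hB := kstep_aux_B hk hq0 hq1 hqs hu (j := ns + k + t) (by omega)
          (by positivity) ih (fun i hi hi' => hub n i (by omega))
        have hidx : ns + k + (t + 1) = ns + k + t + 1 := by omega
        rw [hidx]
        refine le_trans hB (le_of_eq ?_)
        ring
    have claim1 : ∀ j, n + k ≤ j → j ≤ n + k + (k - 1) → u j ≤ M n - c * (M n - u ns) := by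
      intro j hj1 hj2
      by_cases hcase : j < ns + k
      · have hA := kstep_aux_A hk hq0 hq1 hqs hu (ns := ns) (j := j)
          (by omega) (by omega) (by omega) (fun i hi hi' => hub n i (by omega))
        have hcq : c ≤ q ^ k := pow_le_pow_of_le_one hq0.le hq1.le (by omega)
        nlinarith [hA, mul_nonneg (sub_nonneg.mpr hcq) hDnn]
      · have ht : ns + k + (j - ns - k) = j := by omega
        have h2 := claim2 (j - ns - k)
        rw [ht] at h2
        have hq1' : q ^ (k - 1) ≤ q ^ (j - ns - k) :=
          pow_le_pow_of_le_one hq0.le hq1.le (by omega)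
        have hck : q ^ (k - 1) * q ^ k = c := by
          rw [← pow_add, hcdef]; congr 1; omega
        nlinarith [h2, mul_nonneg (sub_nonneg.mpr hq1')
          (mul_nonneg (pow_nonneg hq0.le k) hDnn), hck]
    have hMn : M (n + k) ≤ M n - c * (M n - u ns) := by
      apply Finset.sup'_le
      intro j hj
      simp only [Finset.mem_Icc] at hj
      exact claim1 j (by omega) (by omega)
    rw [hmn]
    exact hMn
  -- oscillation tends to zero
  set Δ : ℕ → ℝ := fun n => M n - m n with hΔdef
  have hΔ0 : ∀ n, 0 ≤ Δ n := fun n => sub_nonneg.mpr (hmM n)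
  have hΔanti : Antitone Δ := by
    apply antitone_nat_of_succ_le
    intro n
    have h1' := hManti (Nat.le_succ n)
    have h2' := hmmono (Nat.le_succ n)
    simp only [hΔdef]
    linarith
  have hΔcontr : ∀ n, Δ (n + k) ≤ (1 - c) * Δ n := by
    intro n
    have h1' := hcontr n
    have h2' := hmmono (show n ≤ n + k by omega)
    simp only [hΔdef]
    nlinarith [h1', h2']
  have hΔgeo : ∀ t, Δ (t * k) ≤ (1 - c) ^ t * Δ 0 := by
    intro t
    induction t with
    | zero => simp
    | succ t ih =>
      have hidx : (t + 1) * k = t * k + k := by ring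
      rw [hidx]
      calc Δ (t * k + k) ≤ (1 - c) * Δ (t * k) := hΔcontr _
        _ ≤ (1 - c) * ((1 - c) ^ t * Δ 0) :=
            mul_le_mul_of_nonneg_left ih (by linarith)
        _ = (1 - c) ^ (t + 1) * Δ 0 := by ring
  have hΔtendsto : Tendsto Δ atTop (nhds 0) := by
    have hdiv : Tendsto (fun n : ℕ => n / k) atTop atTop := by
      apply tendsto_atTop.mpr
      intro b
      refine eventually_atTop.mpr ⟨b * k, fun n hn => ?_⟩
      exact (Nat.le_div_iff_mul_le (by omega)).mpr hn
    have hpow : Tendsto (fun t : ℕ => (1 - c) ^ t * Δ 0) atTop (nhds 0) := by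
      have h := (tendsto_pow_atTop_nhds_zero_of_lt_one
        (by linarith : (0:ℝ) ≤ 1 - c) (by linarith)).mul_const (Δ 0)
      simpa using h
    have hle : ∀ n, Δ n ≤ ((fun t : ℕ => (1 - c) ^ t * Δ 0) ∘ fun n : ℕ => n / k) n := by
      intro n
      simp only [Function.comp]
      calc Δ n ≤ Δ (n / k * k) := hΔanti (Nat.div_mul_le_self n k)
        _ ≤ (1 - c) ^ (n / k) * Δ 0 := hΔgeo _
    exact squeeze_zero hΔ0 hle (hpow.comp hdiv)
  -- convergence of u
  have hMbdd : BddBelow (Set.range M) := by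
    refine ⟨m 0, ?_⟩
    rintro x ⟨n, rfl⟩
    exact le_trans (hmmono (Nat.zero_le n)) (hmM n)
  set L : ℝ := ⨅ n, M n with hLdef
  have hMtendsto : Tendsto M atTop (nhds L) := tendsto_atTop_ciInf hManti hMbdd
  have hmtendsto : Tendsto m atTop (nhds L) := by
    have h := hMtendsto.sub hΔtendsto
    rw [sub_zero] at h
    refine h.congr fun n => ?_
    simp only [hΔdef]
    ring
  have hutendsto : Tendsto u atTop (nhds L) :=
    tendsto_of_tendsto_of_tendsto_of_le_of_le hmtendsto hMtendsto
      (fun n => hlb n n le_rfl) (fun n => hub n n le_rfl)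
  -- positivity of the limit
  have hfpos : ∀ j, k - 1 ≤ j → 0 < f j := by
    intro j
    induction j using Nat.strong_induction_on with
    | _ j ih =>
      intro hj
      rcases eq_or_lt_of_le hj with h | h
      · rw [← h, h1]; norm_num
      · have hk' : k ≤ j := by omega
        rw [hrec j hk']
        refine Finset.sum_pos' (fun i _ => Nat.zero_le _) ?_
        exact ⟨1, Finset.mem_Icc.mpr (by omega), ih (j - 1) (by omega) (by omega)⟩
  have hupos : ∀ j, k - 1 ≤ j → 0 < u j := by
    intro j hj
    have hf : (0:ℝ) < (f j : ℝ) := by exact_mod_cast hfpos j hj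
    simp only [hudef]
    positivity
  have hmpos : 0 < m (k - 1) := by
    have : (0:ℝ) < (Finset.Icc (k-1) (k-1+k-1)).inf' (hne (k-1)) u := by
      rw [Finset.lt_inf'_iff]
      intro i hi
      simp only [Finset.mem_Icc] at hi
      exact hupos i (by omega)
    exact this
  have hLpos : 0 < L := by
    have hge : m (k - 1) ≤ L :=
      ge_of_tendsto hmtendsto (eventually_atTop.mpr ⟨k - 1, fun j hj => hmmono hj⟩)
    linarith
  -- final assembly
  have hshift : Tendsto (fun n => u (n + 1)) atTop (nhds L) :=
    hutendsto.comp (tendsto_add_atTop_nat 1)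
  have hdivt : Tendsto (fun n => u (n + 1) * φ / u n) atTop (nhds (L * φ / L)) :=
    (hshift.mul_const φ).div hutendsto hLpos.ne'
  have hLφ : L * φ / L = φ := by
    rw [mul_comm, mul_div_assoc, div_self hLpos.ne', mul_one]
  rw [hLφ] at hdivt
  refine Tendsto.congr' ?_ hdivt
  filter_upwards [eventually_ge_atTop (k - 1)] with n hn
  have hfn : (0:ℝ) < (f n : ℝ) := by exact_mod_cast hfpos n hn
  have hqn : (0:ℝ) < q ^ n := by positivity
  simp only [hudef]
  rw [pow_succ]
  have hnum : (f (n+1) : ℝ) * (q ^ n * q) * φ = (f (n+1) : ℝ) * q ^ n := by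
    rw [mul_assoc, mul_assoc, hqφ, mul_one]
  rw [hnum, mul_div_mul_right _ _ hqn.ne']
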